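/- Let ζ₁, ζ₂, … be i.i.d. nonnegative random variables such that liminf_{x→∞} x^θ (log x)^{-φ} P[ζ₁ ≥ x] > 0 for some θ > 0 and φ ∈ ℝ. Then for any ε > 0, almost surely, ∑_{i=1}^n ζᵢ ≥ n^{1/θ} (log n)^{(φ-1)/θ - ε} for all but finitely many n. -/

import Mathlib

set_option maxHeartbeats 1000000

open Real Filter MeasureTheory ProbabilityTheory

/-- If `ζ₁, ζ₂, …` are i.i.d. nonnegative random variables with
`P[ζ₁ ≥ x] ≥ c x^{-θ} (log x)^φ` for large `x` (θ > 0, c > 0), then for any `ε > 0`,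
almost surely `∑_{i=1}^n ζᵢ ≥ n^{1/θ} (log n)^{(φ-1)/θ - ε}` for all but
finitely many `n`. -/
theorem iid_sum_lower_bound {Ω : Type*} [MeasurableSpace Ω] (μ : Measure Ω)
    [IsProbabilityMeasure μ] (ζ : ℕ → Ω → ℝ) (hmeas : ∀ i, Measurable (ζ i))
    (hnonneg : ∀ i ω, 0 ≤ ζ i ω)
    (hindep : iIndepFun ζ μ)
    (hident : ∀ i, IdentDistrib (ζ i) (ζ 1) μ μ)
    (θ φ : ℝ) (hθ : 0 < θ)
    (htail : ∃ c : ℝ, 0 < c ∧ ∀ᶠ x : ℝ in atTop,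
      c * x ^ (-θ) * Real.log x ^ φ ≤ (μ {ω | x ≤ ζ 1 ω}).toReal)
    (ε : ℝ) (hε : 0 < ε) :
    ∀ᵐ ω ∂μ, ∀ᶠ n : ℕ in atTop,
      (n : ℝ) ^ (1 / θ) * Real.log n ^ ((φ - 1) / θ - ε) ≤
        ∑ i ∈ Finset.Icc 1 n, ζ i ω := by
  obtain ⟨c, hc, htail⟩ := htail
  set s : ℝ := (φ - 1) / θ - ε with hs_def
  set a : ℕ → ℝ := fun n => (n : ℝ) ^ (1 / θ) * Real.log n ^ s with ha_def
  set K : ℝ := if 0 ≤ φ then (1 / (2 * θ)) ^ φ else (2 / θ) ^ φ with hK_def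
  clear_value s a K
  have hK : 0 < K := by
    rw [hK_def]; split <;> exact Real.rpow_pos_of_pos (by positivity) _
  have hlogtend : Tendsto (fun n : ℕ => Real.log n) atTop atTop :=
    Real.tendsto_log_atTop.comp tendsto_natCast_atTop_atTop
  -- eventually |s| * log x ≤ (1/(2θ)) x
  have hsmall : ∀ᶠ x : ℝ in atTop, |s| * Real.log x ≤ 1 / (2 * θ) * x := by
    have h := (Real.isLittleO_log_id_atTop.const_mul_left |s|).def
      (show (0:ℝ) < 1 / (2 * θ) by positivity)
    filter_upwards [h, eventually_ge_atTop (0:ℝ)] with x hx hx0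
    calc |s| * Real.log x ≤ ‖|s| * Real.log x‖ := le_abs_self _
      _ ≤ 1 / (2 * θ) * ‖id x‖ := hx
      _ = 1 / (2 * θ) * x := by rw [id, Real.norm_of_nonneg hx0]
  -- main eventual facts about a n and log (a n)
  have hmain : ∀ᶠ n : ℕ in atTop,
      1 ≤ Real.log n ∧ 1 / (2 * θ) * Real.log n ≤ Real.log (a n) ∧
      Real.log (a n) ≤ 2 / θ * Real.log n ∧ 0 < a n := by
    filter_upwards [hlogtend.eventually hsmall, hlogtend.eventually_ge_atTop 1,
      eventually_ge_atTop 1] with n hsl hL1 hn1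
    have hn0 : (0:ℝ) < n := by exact_mod_cast hn1
    set L := Real.log n with hL
    have hL0 : 0 < L := lt_of_lt_of_le one_pos hL1
    have hfac1 : (0:ℝ) < (n:ℝ) ^ (1 / θ) := Real.rpow_pos_of_pos hn0 _
    have hfac2 : (0:ℝ) < L ^ s := Real.rpow_pos_of_pos hL0 _
    have hapos : 0 < a n := by rw [ha_def]; exact mul_pos hfac1 hfac2
    have hloga : Real.log (a n) = 1 / θ * L + s * Real.log L := by
      rw [ha_def]
      rw [Real.log_mul hfac1.ne' hfac2.ne', Real.log_rpow hn0, Real.log_rpow hL0]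
    have habs : |s * Real.log L| ≤ 1 / (2 * θ) * L := by
      rw [abs_mul, abs_of_nonneg (Real.log_nonneg hL1)]
      exact hsl
    have hhalf : 1 / θ * L = 1 / (2 * θ) * L + 1 / (2 * θ) * L := by
      field_simp; ring
    have hdbl : 2 / θ * L = 1 / θ * L + 1 / θ * L := by ring
    have hpos2 : 0 ≤ 1 / (2 * θ) * L := by positivity
    refine ⟨hL1, ?_, ?_, hapos⟩
    · rw [hloga]
      have h1 := neg_abs_le (s * Real.log L)
      linarith [habs]
    · rw [hloga]
      have h1 := le_abs_self (s * Real.log L)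
      linarith [habs]
  -- a n tends to infinity
  have hatend : Tendsto a atTop atTop := by
    apply tendsto_atTop_mono' atTop (show ∀ᶠ n : ℕ in atTop,
        Real.exp (1 / (2 * θ) * Real.log n) ≤ a n by
      filter_upwards [hmain] with n hn
      calc Real.exp (1 / (2 * θ) * Real.log n) ≤ Real.exp (Real.log (a n)) :=
            Real.exp_le_exp.2 hn.2.1
        _ = a n := Real.exp_log hn.2.2.2)
    exact Real.tendsto_exp_atTop.comp ((tendsto_const_mul_atTop_of_pos
      (by positivity)).2 hlogtend)
  obtain ⟨x₀, hx₀⟩ := eventually_atTop.1 htail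
  -- the key probability bound, eventually
  have hLpow : Tendsto (fun n : ℕ => Real.log n ^ (ε * θ)) atTop atTop :=
    (tendsto_rpow_atTop (by positivity)).comp hlogtend
  have hkey : ∀ᶠ n : ℕ in atTop,
      2 * Real.log n / n ≤ (μ {ω | a n ≤ ζ 1 ω}).toReal ∧ 1 ≤ n := by
    filter_upwards [hmain, hatend.eventually_ge_atTop x₀,
      hLpow.eventually_ge_atTop (2 / (c * K)), eventually_ge_atTop 1] with n hn hax hLK hn1
    refine ⟨?_, hn1⟩
    obtain ⟨hL1, hla_lb, hla_ub, hapos⟩ := hn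
    set L := Real.log n with hL
    have hL0 : 0 < L := lt_of_lt_of_le one_pos hL1
    have hn0 : (0:ℝ) < n := by exact_mod_cast hn1
    have hla0 : 0 < Real.log (a n) := lt_of_lt_of_le (by positivity) hla_lb
    -- (log a n)^φ ≥ K * L^φ
    have hpow : K * L ^ φ ≤ Real.log (a n) ^ φ := by
      rw [hK_def]
      by_cases hφ : 0 ≤ φ
      · rw [if_pos hφ, ← Real.mul_rpow (by positivity) hL0.le]
        exact Real.rpow_le_rpow (by positivity) hla_lb hφ
      · rw [if_neg hφ, ← Real.mul_rpow (by positivity) hL0.le]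
        exact Real.rpow_le_rpow_of_nonpos hla0 hla_ub (le_of_not_ge hφ)
    -- a n ^ (-θ) = n⁻¹ * L ^ (-(s*θ))
    have hanegθ : a n ^ (-θ) = (n:ℝ)⁻¹ * L ^ (-(s * θ)) := by
      rw [ha_def]
      rw [Real.mul_rpow (by positivity) (by positivity),
        ← Real.rpow_mul hn0.le, ← Real.rpow_mul hL0.le]
      congr 1
      · rw [show 1 / θ * -θ = -1 by field_simp, Real.rpow_neg_one]
      · ring_nf
    have hexp : -(s * θ) + φ = 1 + ε * θ := by
      rw [hs_def]; field_simp; ring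
    have h2 : 2 * L / n ≤ c * a n ^ (-θ) * Real.log (a n) ^ φ := by
      have h3 : c * a n ^ (-θ) * (K * L ^ φ) ≤ c * a n ^ (-θ) * Real.log (a n) ^ φ := by
        apply mul_le_mul_of_nonneg_left hpow
        positivity
      refine le_trans ?_ h3
      rw [hanegθ]
      have : c * ((n:ℝ)⁻¹ * L ^ (-(s * θ))) * (K * L ^ φ)
          = c * K * (L ^ (-(s * θ)) * L ^ φ) * (n:ℝ)⁻¹ := by ring
      rw [this, ← Real.rpow_add hL0, hexp, Real.rpow_add hL0, Real.rpow_one]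
      rw [div_eq_mul_inv]
      apply mul_le_mul_of_nonneg_right _ (by positivity)
      calc 2 * L = 2 * L := rfl
        _ ≤ c * K * L ^ (ε * θ) * L := by
            apply mul_le_mul_of_nonneg_right _ hL0.le
            calc (2:ℝ) = 2 := rfl
              _ ≤ c * K * (2 / (c * K)) := by rw [mul_div_cancel₀]; positivity
              _ ≤ c * K * L ^ (ε * θ) := by
                  apply mul_le_mul_of_nonneg_left hLK (by positivity)
        _ = c * K * (L * L ^ (ε * θ)) := by ring
    exact le_trans h2 (hx₀ (a n) hax)
  -- events
  set A : ℕ → Set Ω := fun n => ⋂ i ∈ Finset.Icc 1 n, {ω | ζ i ω < a n} with hA_def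
  clear_value A
  have hμA : ∀ n, μ (A n) = μ {ω | ζ 1 ω < a n} ^ n := by
    intro n
    have h1 : μ (A n) = ∏ i ∈ Finset.Icc 1 n, μ {ω | ζ i ω < a n} := by
      rw [hA_def]
      apply hindep.meas_biInter
      intro i _
      exact ⟨Set.Iio (a n), measurableSet_Iio, rfl⟩
    rw [h1]
    have h2 : ∀ i ∈ Finset.Icc 1 n, μ {ω | ζ i ω < a n} = μ {ω | ζ 1 ω < a n} := by
      intro i _
      exact (hident i).measure_mem_eq measurableSet_Iio
    rw [Finset.prod_congr rfl h2, Finset.prod_const, Nat.card_Icc]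
    norm_num
  -- bound μ (A n)
  have hbound : ∀ᶠ n : ℕ in atTop, μ (A n) ≤ ENNReal.ofReal ((n:ℝ) ^ (-2 : ℝ)) := by
    filter_upwards [hkey] with n hn
    obtain ⟨hp, hn1⟩ := hn
    have hn0 : (0:ℝ) < n := by exact_mod_cast hn1
    set P : ENNReal := μ {ω | a n ≤ ζ 1 ω} with hP
    set p : ℝ := P.toReal with hp_def
    have hmeasset : MeasurableSet {ω | a n ≤ ζ 1 ω} :=
      (hmeas 1) measurableSet_Ici
    have hPle : P ≤ 1 := prob_le_one
    have hp1 : p ≤ 1 := by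
      rw [hp_def]
      calc P.toReal ≤ (1 : ENNReal).toReal := ENNReal.toReal_mono ENNReal.one_ne_top hPle
        _ = 1 := by simp
    have hp0 : 0 ≤ p := ENNReal.toReal_nonneg
    have hcompl : {ω | ζ 1 ω < a n} = {ω | a n ≤ ζ 1 ω}ᶜ := by
      ext ω; simp [not_le]
    have hμlt : μ {ω | ζ 1 ω < a n} = ENNReal.ofReal (1 - p) := by
      rw [hcompl, prob_compl_eq_one_sub hmeasset, ← hP]
      rw [← ENNReal.ofReal_toReal (a := 1 - P) (by
        exact ne_top_of_le_ne_top ENNReal.one_ne_top (tsub_le_self.trans le_rfl))]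
      congr 1
      rw [ENNReal.toReal_sub_of_le hPle ENNReal.one_ne_top]
      simp [hp_def]
    rw [hμA n, hμlt, ← ENNReal.ofReal_pow (by linarith)]
    apply ENNReal.ofReal_le_ofReal
    calc (1 - p) ^ n ≤ Real.exp (-p) ^ n := by
          apply pow_le_pow_left₀ (by linarith)
          linarith [Real.add_one_le_exp (-p)]
      _ = Real.exp (n * (-p)) := (Real.exp_nat_mul _ n).symm
      _ ≤ Real.exp (-(2 * Real.log n)) := by
          apply Real.exp_le_exp.2
          have : 2 * Real.log n ≤ n * p := by
            rw [div_le_iff₀ hn0] at hp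
            linarith [hp]
          linarith
      _ = (n:ℝ) ^ (-2 : ℝ) := by
          rw [Real.rpow_def_of_pos hn0]; ring_nf
  -- summability
  obtain ⟨N, hN⟩ := eventually_atTop.1 hbound
  have hsum : (∑' n, μ (A n)) ≠ ⊤ := by
    set f : ℕ → ℝ := fun m : ℕ => (m : ℝ) ^ (-2 : ℝ) with hf_def
    have hSf : Summable f := Real.summable_nat_rpow.2 (by norm_num)
    have hle : ∀ n, μ (A n) ≤ ENNReal.ofReal (f n) + (if n < N then 1 else 0) := by
      intro n
      by_cases h : n < N
      · rw [if_pos h]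
        calc μ (A n) ≤ 1 := prob_le_one
          _ ≤ ENNReal.ofReal (f n) + 1 := self_le_add_left _ _
      · rw [if_neg h, add_zero]
        exact hN n (Nat.le_of_not_lt h)
    have hle2 : (∑' n, μ (A n))
        ≤ (∑' n, ENNReal.ofReal (f n)) + ∑' n, (if n < N then (1:ENNReal) else 0) := by
      rw [← ENNReal.tsum_add]
      exact ENNReal.tsum_le_tsum hle
    apply ne_top_of_le_ne_top _ hle2
    apply ENNReal.add_ne_top.2
    constructor
    · rw [← ENNReal.ofReal_tsum_of_nonneg (fun n => Real.rpow_nonneg (by positivity) _) hSf]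
      exact ENNReal.ofReal_ne_top
    · rw [tsum_eq_sum (s := Finset.range N) (by
        intro b hb
        rw [if_neg (by simpa using hb)])]
      exact (ENNReal.sum_lt_top.2 fun _ _ => by split <;> simp).ne
  filter_upwards [ae_eventually_notMem hsum] with ω hω
  filter_upwards [hω, eventually_ge_atTop 1] with n hn hn1
  rw [hA_def] at hn
  simp only [Set.mem_iInter, Set.mem_setOf_eq, not_forall, not_lt] at hn
  obtain ⟨i, hi, hia⟩ := hn
  calc (n : ℝ) ^ (1 / θ) * Real.log n ^ s = a n := by rw [ha_def]
    _ ≤ ζ i ω := hia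
    _ ≤ ∑ j ∈ Finset.Icc 1 n, ζ j ω :=
        Finset.single_le_sum (fun j _ => hnonneg j ω) hi
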